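/- arXiv:1807.11405 — 2 statements merged into one kernel-verified Lean document; each statement's English description precedes it below -/
import Mathlib

section
/- Let f : G → K be a group homomorphism and N a perfect subgroup of G. Then the normal closure in K of the image f(N) is a perfect subgroup of K. -/
/-- A subgroup `H` of a group is *perfect* if it equals its own commutator
subgroup `⁅H, H⁆`. -/
def Subgroup.IsPerfect {G : Type*} [Group G] (H : Subgroup G) : Prop :=
  H = ⁅H, H⁆

/-- If `f : G → K` is a group homomorphism and `N` is a perfect subgroup of
`G`, then the normal closure in `K` of the image `f(N)` is a perfect
subgroup of `K`. -/
theorem normalClosure_map_isPerfect {G K : Type*} [Group G] [Group K]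
    (f : G →* K) (N : Subgroup G) (hN : N.IsPerfect) :
    (Subgroup.normalClosure ((N.map f : Subgroup K) : Set K)).IsPerfect := by
  set M := Subgroup.normalClosure ((N.map f : Subgroup K) : Set K) with hM
  have hMnormal : M.Normal := Subgroup.normalClosure_normal
  have hcomm_normal : (⁅M, M⁆ : Subgroup K).Normal := Subgroup.commutator_normal M M
  refine le_antisymm ?_ (Subgroup.commutator_le.mpr fun g₁ h₁ g₂ h₂ => M.mul_mem
    (M.mul_mem (M.mul_mem h₁ h₂) (M.inv_mem h₁)) (M.inv_mem h₂))
  refine Subgroup.normalClosure_le_normal ?_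
  intro x hx
  obtain ⟨y, hy, rfl⟩ := hx
  have hmap : N.map f ≤ M := Subgroup.subset_normalClosure
  have : N.map f = ⁅N.map f, N.map f⁆ := by
    rw [← Subgroup.map_commutator, ← hN]
  have hle : N.map f ≤ ⁅M, M⁆ := this.le.trans (Subgroup.commutator_mono hmap hmap)
  exact hle ⟨y, hy, rfl⟩
end

section
/- An inverse sequence of groups (Gₙ, gₙ) is stable if and only if there exists a strictly increasing function φ : ℕ → ℕ such that, writing λₖ : G_{φ(k)} → G_{φ(k-1)} for the composite bonding homomorphism (k ≥ 1), for every k ≥ 1 the composite bonding homomorphism G_{φ(k+1)} → G_{φ(k)} restricts to an isomorphism from the image of λ_{k+1} onto the image of λₖ. -/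
universe u

/-- Given an inverse sequence of groups `(Gₙ, gₙ)` (with bonding homomorphisms
`gₙ : Gₙ₊₁ →* Gₙ`), the composite bonding homomorphism `Gₙ →* Gₘ` for `m ≤ n`,
i.e. `gₘ ∘ gₘ₊₁ ∘ ⋯ ∘ gₙ₋₁` (the identity when `m = n`). -/
def bondingComp {G : ℕ → Type*} [∀ n, Group (G n)] (g : ∀ n, G (n + 1) →* G n)
    (m n : ℕ) (h : m ≤ n) : G n →* G m :=
  Nat.leRecOn h (fun {k} ih => ih.comp (g k)) (MonoidHom.id (G m))

/-- Two inverse sequences of groups are *pro-isomorphic* if there exist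
strictly increasing `i j : ℕ → ℕ` and homomorphisms `dₖ : B (j k) →* A (i k)`
and `uₖ : A (i (k+1)) →* B (j k)` such that `dₖ ∘ uₖ` is the composite bonding
homomorphism `A (i (k+1)) →* A (i k)` and `uₖ ∘ dₖ₊₁` is the composite bonding
homomorphism `B (j (k+1)) →* B (j k)`. -/
def ProIsomorphic (A : ℕ → Type*) [∀ n, Group (A n)] (a : ∀ n, A (n + 1) →* A n)
    (B : ℕ → Type*) [∀ n, Group (B n)] (b : ∀ n, B (n + 1) →* B n) : Prop :=
  ∃ (i j : ℕ → ℕ) (hi : StrictMono i) (hj : StrictMono j)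
    (d : ∀ k, B (j k) →* A (i k)) (u : ∀ k, A (i (k + 1)) →* B (j k)),
    (∀ k, (d k).comp (u k) = bondingComp a (i k) (i (k + 1)) (hi (Nat.lt_succ_self k)).le) ∧
    (∀ k, (u k).comp (d (k + 1)) = bondingComp b (j k) (j (k + 1)) (hj (Nat.lt_succ_self k)).le)

/-- An inverse sequence of groups is *stable* if it is pro-isomorphic to a
constant inverse sequence `C ← C ← C ← ⋯` in which every bonding map is the
identity homomorphism of a fixed group `C`. -/
def Stable (G : ℕ → Type u) [∀ n, Group (G n)] (g : ∀ n, G (n + 1) →* G n) : Prop :=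
  ∃ (C : Type u) (inst : Group C),
    letI := inst
    ProIsomorphic G g (fun _ => C) (fun _ => MonoidHom.id C)

section lems
variable {G : ℕ → Type*} [∀ n, Group (G n)] (g : ∀ n, G (n + 1) →* G n)

theorem bondingComp_self (m : ℕ) : bondingComp g m m le_rfl = MonoidHom.id (G m) :=
  Nat.leRecOn_self _

theorem bondingComp_succ {m n : ℕ} (h : m ≤ n) (h' : m ≤ n + 1) :
    bondingComp g m (n + 1) h' = (bondingComp g m n h).comp (g n) :=
  Nat.leRecOn_succ h _

theorem bondingComp_id (C : Type*) [Group C] {m n : ℕ} (h : m ≤ n) :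
    bondingComp (G := fun _ => C) (fun _ => MonoidHom.id C) m n h = MonoidHom.id C := by
  induction n, h using Nat.le_induction with
  | base => exact bondingComp_self _ m
  | succ n hn ih => rw [bondingComp_succ _ hn (hn.trans n.le_succ), ih]; rfl
end lems

section aux
variable {G : ℕ → Type u} [∀ n, Group (G n)] (g : ∀ n, G (n + 1) →* G n)
  (φ : ℕ → ℕ) (hφ : StrictMono φ)

def fAux (k : ℕ) : G (φ (k + 1)) →* G (φ k) :=
  bondingComp g (φ k) (φ (k + 1)) (hφ (Nat.lt_succ_self k)).le

def ImAux (k : ℕ) : Subgroup (G (φ k)) := (fAux g φ hφ k).range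

variable (hbij : ∀ k, Set.BijOn (fAux g φ hφ k) (ImAux g φ hφ (k + 1)) (ImAux g φ hφ k))

noncomputable def betaAux
    (hbij : ∀ k, Set.BijOn (fAux g φ hφ k) (ImAux g φ hφ (k + 1)) (ImAux g φ hφ k)) (k : ℕ) : ↥(ImAux g φ hφ (k + 1)) ≃* ↥(ImAux g φ hφ k) :=
  MulEquiv.ofBijective
    (((fAux g φ hφ k).domRestrict (ImAux g φ hφ (k + 1))).codRestrict (ImAux g φ hφ k)
      (fun x => (hbij k).mapsTo x.2))
    ⟨fun x y hxy => Subtype.ext ((hbij k).injOn x.2 y.2 (congrArg Subtype.val hxy)),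
     fun y => by
       obtain ⟨x, hx, hfx⟩ := (hbij k).surjOn y.2
       exact ⟨⟨x, hx⟩, Subtype.ext hfx⟩⟩

@[simp] theorem betaAux_coe (k : ℕ) (x : ↥(ImAux g φ hφ (k + 1))) :
    (betaAux g φ hφ hbij k x : G (φ k)) = fAux g φ hφ k x := rfl

noncomputable def eAux
    (hbij : ∀ k, Set.BijOn (fAux g φ hφ k) (ImAux g φ hφ (k + 1)) (ImAux g φ hφ k)) : ∀ k, ↥(ImAux g φ hφ 0) ≃* ↥(ImAux g φ hφ k)
  | 0 => MulEquiv.refl _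
  | (k + 1) => (eAux hbij k).trans (betaAux g φ hφ hbij k).symm

theorem betaAux_eAux (k : ℕ) (c : ↥(ImAux g φ hφ 0)) :
    betaAux g φ hφ hbij k (eAux g φ hφ hbij (k + 1) c) = eAux g φ hφ hbij k c := by
  simp [eAux]
end aux


/-- An inverse sequence of groups `(Gₙ, gₙ)` is stable iff there is a strictly
increasing `φ : ℕ → ℕ` such that, with `λₖ : G (φ k) →* G (φ (k-1))` the
composite bonding homomorphisms (`k ≥ 1`), for every `k ≥ 1` the composite
bonding homomorphism restricts to an isomorphism from the image of `λₖ₊₁`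
onto the image of `λₖ`. -/
theorem stable_iff_images_stabilize {G : ℕ → Type u} [∀ n, Group (G n)]
    (g : ∀ n, G (n + 1) →* G n) :
    Stable G g ↔
      ∃ (φ : ℕ → ℕ) (hφ : StrictMono φ),
        ∀ k : ℕ,
          Set.BijOn (bondingComp g (φ k) (φ (k + 1)) (hφ (Nat.lt_succ_self k)).le)
            ((bondingComp g (φ (k + 1)) (φ (k + 2)) (hφ (Nat.lt_succ_self (k + 1))).le).range :
              Set (G (φ (k + 1))))
            ((bondingComp g (φ k) (φ (k + 1)) (hφ (Nat.lt_succ_self k)).le).range :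
              Set (G (φ k))) := by
  constructor
  · rintro ⟨C, instC, i, j, hi, hj, d, u, h1, h2⟩
    have hud : ∀ k c, u k (d (k + 1) c) = c := by
      intro k c
      have := congrArg (fun f => f c) (h2 k)
      simpa [bondingComp_id] using this
    have hdu : ∀ k x, d k (u k x) =
        bondingComp g (i k) (i (k + 1)) (hi (Nat.lt_succ_self k)).le x :=
      fun k x => congrArg (fun f => f x) (h1 k)
    have hiS : StrictMono (fun k => i (k + 1)) := fun a b hab => hi (Nat.succ_lt_succ hab)
    refine ⟨fun k => i (k + 1), hiS, fun k => ?_⟩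
    have hF : ∀ x, bondingComp g (i (k + 1)) (i (k + 2))
        (hiS (Nat.lt_succ_self k)).le x = d (k + 1) (u (k + 1) x) :=
      fun x => (hdu (k + 1) x).symm
    have hsrc : ∀ x, x ∈ ((bondingComp g (i (k + 2)) (i (k + 3))
        (hiS (Nat.lt_succ_self (k + 1))).le).range : Set (G (i (k + 2)))) ↔
        ∃ c, x = d (k + 2) c := by
      intro x
      constructor
      · rintro ⟨y, rfl⟩
        exact ⟨u (k + 2) y, (hdu (k + 2) y).symm⟩
      · rintro ⟨c, rfl⟩
        exact ⟨d (k + 3) c, by rw [← hdu (k + 2), hud]⟩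
    refine ⟨fun x _ => ⟨x, rfl⟩, ?_, ?_⟩
    · intro x hx y hy hxy
      obtain ⟨c, rfl⟩ := (hsrc x).mp hx
      obtain ⟨c', rfl⟩ := (hsrc y).mp hy
      have : d (k + 1) c = d (k + 1) c' := by
        rw [hF, hF, hud, hud] at hxy; exact hxy
      have hcc : c = c' := by
        have := congrArg (u k) this
        rwa [hud, hud] at this
      rw [hcc]
    · rintro y ⟨z, rfl⟩
      refine ⟨d (k + 2) (u (k + 1) z), (hsrc _).mpr ⟨_, rfl⟩, ?_⟩
      rw [hF, hud, hF]
  · rintro ⟨φ, hφ, hbij⟩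
    have hbij' : ∀ k, Set.BijOn (fAux g φ hφ k) (ImAux g φ hφ (k + 1)) (ImAux g φ hφ k) :=
      hbij
    refine ⟨↥(ImAux g φ hφ 0), inferInstance, fun k => φ (k + 1), id,
      (fun a b hab => hφ (Nat.succ_lt_succ hab)), strictMono_id,
      fun k => (ImAux g φ hφ (k + 1)).subtype.comp (eAux g φ hφ hbij' (k + 1)).toMonoidHom,
      fun k => (eAux g φ hφ hbij' (k + 1)).symm.toMonoidHom.comp
        ((fAux g φ hφ (k + 1)).rangeRestrict),
      ?_, ?_⟩
    · intro k
      ext x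
      show ((eAux g φ hφ hbij' (k + 1)) ((eAux g φ hφ hbij' (k + 1)).symm
        ((fAux g φ hφ (k + 1)).rangeRestrict x)) : G (φ (k + 1))) = _
      erw [MulEquiv.apply_symm_apply]
      rfl
    · intro k
      rw [bondingComp_id]
      ext c
      have key : (eAux g φ hφ hbij' (k + 1)).symm
          ((fAux g φ hφ (k + 1)).rangeRestrict ((eAux g φ hφ hbij' (k + 2) c : _))) = c := by
        have h3 : (fAux g φ hφ (k + 1)).rangeRestrict ((eAux g φ hφ hbij' (k + 2) c : _)) =
            betaAux g φ hφ hbij' (k + 1) (eAux g φ hφ hbij' (k + 2) c) :=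
          Subtype.ext rfl
        rw [h3, betaAux_eAux, MulEquiv.symm_apply_apply]
      exact congrArg Subtype.val key
end
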